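/- For λ ≥ 0, define Q(m, λ) = ∑_{j=0}^{m−1} (λ^j / j!) · e^{−λ} for positive integers m. Then for every μ > 0, ∫₀¹ Q(⌊y/μ⌋ + 1, λ) dy = (1 − λμ) · Q(⌈1/μ⌉, λ) + λ^{⌈1/μ⌉} · μ · e^{−λ} / (⌈1/μ⌉ − 1)!, where ⌊·⌋ and ⌈·⌉ denote the floor and ceiling functions and (⌈1/μ⌉ − 1)! = Γ(⌈1/μ⌉). -/

import Mathlib

open MeasureTheory

/-- The regularized upper incomplete gamma function at positive integer first argument `m`,
equal to the Poisson(λ) cumulative distribution function at `m − 1`. -/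
noncomputable def Qreg (m : ℕ) (lam : ℝ) : ℝ :=
  ∑ j ∈ Finset.range m, lam ^ j / (j.factorial : ℝ) * Real.exp (-lam)

lemma Qreg_succ (m : ℕ) (lam : ℝ) :
    Qreg (m + 1) lam = Qreg m lam + lam ^ m / (m.factorial : ℝ) * Real.exp (-lam) := by
  simp [Qreg, Finset.sum_range_succ]

lemma sum_Qreg (lam : ℝ) (m : ℕ) :
    ∑ i ∈ Finset.range m, Qreg (i + 1) lam
      = m * Qreg (m + 1) lam - lam * Qreg m lam := by
  induction m with
  | zero => simp [Qreg]
  | succ m ih =>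
    rw [Finset.sum_range_succ, ih, Qreg_succ (m + 1), Qreg_succ m]
    have h1 : (((m + 1 : ℕ)).factorial : ℝ) = (m + 1) * m.factorial := by
      push_cast [Nat.factorial_succ]; ring
    have h2 : (m.factorial : ℝ) ≠ 0 := Nat.cast_ne_zero.mpr m.factorial_ne_zero
    push_cast [h1]
    field_simp
    ring

/-- Closed form of the integral of the Poisson CDF `y ↦ F_Y(y/μ) = Q(⌊y/μ⌋ + 1, λ)` over `(0,1)`:
`∫₀¹ Q(⌊y/μ⌋+1, λ) dy = (1 − λμ) Q(⌈1/μ⌉, λ) + λ^{⌈1/μ⌉} μ e^{−λ} / (⌈1/μ⌉ − 1)!`. -/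
theorem stmt_9 (lam μ : ℝ) (hlam : 0 ≤ lam) (hμ : 0 < μ) :
    ∫ y in Set.Ioo (0 : ℝ) 1, Qreg (⌊y / μ⌋₊ + 1) lam
      = (1 - lam * μ) * Qreg ⌈1 / μ⌉₊ lam
        + lam ^ ⌈1 / μ⌉₊ * μ * Real.exp (-lam) / ((⌈1 / μ⌉₊ - 1).factorial : ℝ) := by
  set f : ℝ → ℝ := fun y => Qreg (⌊y / μ⌋₊ + 1) lam with hf
  set n : ℕ := ⌈1 / μ⌉₊ with hn
  have hμ0 : (0:ℝ) < 1 / μ := by positivity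
  have hn1 : 1 ≤ n := Nat.ceil_pos.mpr hμ0
  have hnμ : 1 ≤ (n : ℝ) * μ := by
    have := Nat.le_ceil (1 / μ)
    rw [← hn] at this
    calc (1:ℝ) = (1 / μ) * μ := by field_simp
    _ ≤ (n : ℝ) * μ := by nlinarith
  have hn1μ : ((n : ℝ) - 1) * μ < 1 := by
    have := Nat.ceil_lt_add_one hμ0.le
    rw [← hn] at this
    have h2 : ((n : ℝ) - 1) < 1 / μ := by linarith
    calc ((n : ℝ) - 1) * μ < (1 / μ) * μ := by nlinarith
    _ = 1 := by field_simp
  -- partition points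
  set a : ℕ → ℝ := fun i => min ((i : ℝ) * μ) 1 with ha
  have ha0 : a 0 = 0 := by simp [ha, hμ.le]
  have han : a n = 1 := by simp [ha, hnμ]
  have hamono : ∀ i, a i ≤ a (i + 1) := by
    intro i
    apply min_le_min _ le_rfl
    push_cast
    nlinarith
  -- for i < n, a i = i * μ
  have hai : ∀ i < n, a i = (i : ℝ) * μ := by
    intro i hi
    have : (i : ℝ) ≤ (n : ℝ) - 1 := by
      have : (i : ℝ) + 1 ≤ n := by exact_mod_cast hi
      linarith
    have : (i : ℝ) * μ < 1 := by nlinarith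
    simp [ha, this.le]
  -- on each open piece f is constant
  have hEq : ∀ i < n, Set.EqOn f (fun _ => Qreg (i + 1) lam) (Set.Ioo (a i) (a (i + 1))) := by
    intro i hi y hy
    have hlo : (i : ℝ) * μ < y := by rw [← hai i hi]; exact hy.1
    have hhi : y < ((i : ℝ) + 1) * μ := by
      have := hy.2
      have h2 : a (i + 1) ≤ ((i : ℝ) + 1) * μ := by
        simp only [ha]; push_cast; exact min_le_left _ _
      linarith
    have hy0 : 0 ≤ y / μ :=
      div_nonneg (le_of_lt (lt_of_le_of_lt (by positivity) hlo)) hμ.le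
    have hfl : ⌊y / μ⌋₊ = i := by
      rw [Nat.floor_eq_iff hy0]
      constructor
      · exact le_of_lt ((lt_div_iff₀ hμ).mpr (by linarith))
      · rw [div_lt_iff₀ hμ]; linarith
    simp [hf, hfl]
  -- integrability of each piece
  have hInt : ∀ i < n, IntervalIntegrable f volume (a i) (a (i + 1)) := by
    intro i hi
    rw [intervalIntegrable_iff_integrableOn_Ioc_of_le (hamono i)]
    have h1 : IntegrableOn f (Set.Ioo (a i) (a (i + 1))) volume :=
      (integrableOn_const measure_Ioo_lt_top.ne).congr_fun
        (fun y hy => ((hEq i hi) hy).symm) measurableSet_Ioo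
    exact h1.congr_set_ae Ioo_ae_eq_Ioc.symm
  -- value of each piece
  have hPiece : ∀ i < n, ∫ x in (a i)..(a (i + 1)), f x
      = (a (i + 1) - a i) * Qreg (i + 1) lam := by
    intro i hi
    rw [intervalIntegral.integral_of_le (hamono i), integral_Ioc_eq_integral_Ioo,
      setIntegral_congr_fun measurableSet_Ioo (hEq i hi), setIntegral_const,
      Real.volume_real_Ioo_of_le (hamono i)]
    exact smul_eq_mul _ _
  -- total integral
  have hTotal : ∫ y in Set.Ioo (0 : ℝ) 1, f y
      = ∑ i ∈ Finset.range n, (a (i + 1) - a i) * Qreg (i + 1) lam := by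
    rw [← integral_Ioc_eq_integral_Ioo, ← intervalIntegral.integral_of_le (by norm_num : (0:ℝ) ≤ 1)]
    rw [show (0:ℝ) = a 0 from ha0.symm, show (1:ℝ) = a n from han.symm]
    rw [← intervalIntegral.sum_integral_adjacent_intervals hInt]
    exact Finset.sum_congr rfl fun i hi => hPiece i (Finset.mem_range.mp hi)
  rw [hTotal]
  clear_value n
  -- split off the last term; write n = m + 1
  obtain ⟨m, rfl⟩ : ∃ m, n = m + 1 := ⟨n - 1, (Nat.succ_pred_eq_of_pos hn1).symm⟩
  rw [Finset.sum_range_succ]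
  have hlast : a (m + 1) = 1 := han
  have ham : a m = (m : ℝ) * μ := hai m (Nat.lt_succ_self m)
  have hmid : ∀ i ∈ Finset.range m, (a (i + 1) - a i) * Qreg (i + 1) lam
      = μ * Qreg (i + 1) lam := by
    intro i hi
    have hi' : i < m := Finset.mem_range.mp hi
    rw [hai i (hi'.trans (Nat.lt_succ_self m)), hai (i + 1) (Nat.succ_lt_succ hi')]
    push_cast; ring
  rw [Finset.sum_congr rfl hmid, ← Finset.mul_sum, sum_Qreg, hlast, ham]
  -- now pure algebra
  have hns : (m + 1 : ℕ) - 1 = m := rfl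
  rw [hns, Qreg_succ m lam, pow_succ]
  have h2 : (m.factorial : ℝ) ≠ 0 := Nat.cast_ne_zero.mpr m.factorial_ne_zero
  field_simp
  ring
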